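/- Let Γ be a self-adjoint, positive, unbounded operator with discrete spectrum on a separable Hilbert space H, and let L be a self-adjoint operator satisfying ‖Lψ‖ ≤ C‖ψ‖_1 and ‖e^{iLt}ψ‖_1 ≤ B(t)‖ψ‖_1 for all ψ ∈ H^1(Γ) and t > 0, with B ∈ L²_loc[0,∞). Let φ^0(t) and φ^ε(t) solve (φ^0)' = iLφ^0 and (φ^ε)' = (iL − εΓ)φ^ε respectively, with common initial datum φ_0 ∈ H^1(Γ). Then (d/dt)‖φ^ε(t) − φ^0(t)‖² ≤ (ε/2)‖φ^0(t)‖_1² ≤ (ε/2) B(t)² ‖φ_0‖_1². -/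

import Mathlib

open MeasureTheory Filter Set
open scoped InnerProductSpace ENNReal

noncomputable section

variable {H : Type*} [NormedAddCommGroup H] [InnerProductSpace ℂ H] [CompleteSpace H]

/-- The spectral data of a self-adjoint, positive, unbounded operator `Γ` with discrete
spectrum on a separable Hilbert space `H`: the eigenvalues `0 < λ 0 ≤ λ 1 ≤ ⋯ → ∞`
together with an orthonormal (Hilbert) basis of corresponding eigenvectors. -/
structure DiscreteSpectralOp (H : Type*) [NormedAddCommGroup H]
    [InnerProductSpace ℂ H] [CompleteSpace H] where
  /-- the orthonormal eigenbasis of `Γ` -/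
  e : HilbertBasis ℕ ℂ H
  /-- the eigenvalues of `Γ` -/
  lam : ℕ → ℝ
  lam_pos : ∀ n, 0 < lam n
  lam_mono : Monotone lam
  lam_top : Tendsto lam atTop atTop

namespace DiscreteSpectralOp

variable (Γ : DiscreteSpectralOp H)

/-- the coefficients of `ψ` in the eigenbasis of `Γ` -/
def coeff (ψ : H) (n : ℕ) : ℂ := Γ.e.repr ψ n

/-- membership in the (homogeneous) Sobolev space `H^m(Γ)`:
`∑ λ_n^m |c_n|² < ∞` -/
def MemHs (m : ℝ) (ψ : H) : Prop :=
  Summable fun n => Γ.lam n ^ m * ‖Γ.coeff ψ n‖ ^ 2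

/-- the Sobolev norm `‖ψ‖_{H^m(Γ)} = (∑ λ_n^m |c_n|²)^{1/2}` -/
def snorm (m : ℝ) (ψ : H) : ℝ :=
  Real.sqrt (∑' n, Γ.lam n ^ m * ‖Γ.coeff ψ n‖ ^ 2)

/-- the operator `Γ` itself, `Γψ = ∑ λ_n c_n e_n` (junk value off its domain `H²(Γ)`) -/
def apply (ψ : H) : H := ∑' n, ((Γ.lam n : ℂ) * Γ.coeff ψ n) • (Γ.e n : H)

/-- the orthogonal projection `P_N` onto the span of the first `N` eigenvectors of `Γ` -/
def projN (N : ℕ) (ψ : H) : H := ∑ n ∈ Finset.range N, Γ.coeff ψ n • (Γ.e n : H)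

end DiscreteSpectralOp

/-- A strongly continuous one-parameter unitary group `t ↦ U t = e^{iLt}` on `H`
(by Stone's theorem such groups correspond exactly to self-adjoint generators `L`). -/
structure UnitaryGroup (H : Type*) [NormedAddCommGroup H] [InnerProductSpace ℂ H]
    [CompleteSpace H] where
  /-- the unitary operator `e^{iLt}` -/
  U : ℝ → (H ≃ₗᵢ[ℂ] H)
  map_zero : ∀ ψ, U 0 ψ = ψ
  map_add : ∀ s t ψ, U (s + t) ψ = U s (U t ψ)
  strong_cont : ∀ ψ, Continuous fun t => U t ψ

namespace UnitaryGroup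

variable (G : UnitaryGroup H)

/-- `ψ` is an eigenvector of the self-adjoint generator `L` of the group `U t = e^{iLt}`,
i.e. `ψ ≠ 0` and `e^{iLt} ψ = e^{iEt} ψ` for some real eigenvalue `E`. -/
def IsEigenvector (ψ : H) : Prop :=
  ψ ≠ 0 ∧ ∃ E : ℝ, ∀ t : ℝ, G.U t ψ = Complex.exp (Complex.I * E * t) • ψ

/-- the pure point spectral subspace of the generator of the group -/
def ppSpace : Submodule ℂ H :=
  (Submodule.span ℂ {ψ : H | G.IsEigenvector ψ}).topologicalClosure

/-- the spectral projection `P_p` onto the pure point spectral subspace -/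
def Pp (ψ : H) : H :=
  haveI : CompleteSpace (G.ppSpace : Submodule ℂ H) :=
    (Submodule.isClosed_topologicalClosure _).completeSpace_coe
  (Submodule.orthogonalProjectionOnto G.ppSpace ψ : H)

/-- the spectral projection `P_c` onto the continuous spectral subspace -/
def Pc (ψ : H) : H := ψ - G.Pp ψ

end UnitaryGroup

/-- `φ` solves the damped equation `(φ^ε)'(t) = (iL − εΓ)φ^ε(t)`, `φ^ε(0) = φ₀`. -/
def IsDampedSolution (Γ : DiscreteSpectralOp H) (L : H →ₗ[ℂ] H) (ε : ℝ) (φ₀ : H)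
    (φ : ℝ → H) : Prop :=
  φ 0 = φ₀ ∧ ContinuousOn φ (Ici 0) ∧
    ∀ t : ℝ, 0 < t → Γ.MemHs 2 (φ t) ∧
      HasDerivAt φ (Complex.I • L (φ t) - (ε : ℂ) • Γ.apply (φ t)) t

/-- `φ` solves the free equation `(φ⁰)'(t) = iLφ⁰(t)`, `φ⁰(0) = φ₀`. -/
def IsFreeSolution (Γ : DiscreteSpectralOp H) (L : H →ₗ[ℂ] H) (φ₀ : H)
    (φ : ℝ → H) : Prop :=
  φ 0 = φ₀ ∧ ∀ t : ℝ, Γ.MemHs 1 (φ t) ∧ HasDerivAt φ (Complex.I • L (φ t)) t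

section Auxiliary

namespace DiscreteSpectralOp

variable (Γ : DiscreteSpectralOp H)

lemma coeff_sub (ψ χ : H) (n : ℕ) :
    Γ.coeff (ψ - χ) n = Γ.coeff ψ n - Γ.coeff χ n := by
  simp [coeff, map_sub, lp.coeFn_sub]

lemma my_snorm_nonneg (m : ℝ) (ψ : H) : 0 ≤ Γ.snorm m ψ := Real.sqrt_nonneg _

lemma sq_snorm (m : ℝ) (ψ : H) :
    Γ.snorm m ψ ^ 2 = ∑' n, Γ.lam n ^ m * ‖Γ.coeff ψ n‖ ^ 2 :=
  Real.sq_sqrt (tsum_nonneg fun n =>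
    mul_nonneg (Real.rpow_nonneg (Γ.lam_pos n).le m) (sq_nonneg _))

lemma summable_one {ψ : H} (h : Γ.MemHs 1 ψ) :
    Summable fun n => Γ.lam n * ‖Γ.coeff ψ n‖ ^ 2 :=
  h.congr fun n => by rw [Real.rpow_one]

lemma sq_snorm_one (ψ : H) :
    Γ.snorm 1 ψ ^ 2 = ∑' n, Γ.lam n * ‖Γ.coeff ψ n‖ ^ 2 := by
  simpa [Real.rpow_one] using Γ.sq_snorm 1 ψ

lemma MemHs.one_of_two {ψ : H} (h : Γ.MemHs 2 ψ) : Γ.MemHs 1 ψ := by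
  have h2 : Summable fun n => (Γ.lam 0)⁻¹ * (Γ.lam n ^ (2:ℝ) * ‖Γ.coeff ψ n‖ ^ 2) :=
    h.mul_left _
  refine Summable.of_nonneg_of_le (fun n =>
    mul_nonneg (Real.rpow_nonneg (Γ.lam_pos n).le 1) (sq_nonneg _)) (fun n => ?_) h2
  have hpos := Γ.lam_pos n
  have h0 := Γ.lam_pos 0
  have hle : Γ.lam 0 ≤ Γ.lam n := Γ.lam_mono (Nat.zero_le n)
  rw [Real.rpow_one, show (2:ℝ) = ((2:ℕ):ℝ) by norm_num, Real.rpow_natCast,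
    inv_mul_eq_div, le_div_iff₀ h0]
  nlinarith [mul_nonneg (mul_nonneg (sub_nonneg.2 hle) hpos.le) (sq_nonneg ‖Γ.coeff ψ n‖)]

lemma MemHs.sub {m : ℝ} {ψ χ : H} (hψ : Γ.MemHs m ψ) (hχ : Γ.MemHs m χ) :
    Γ.MemHs m (ψ - χ) := by
  have h2 : Summable fun n => 2 * (Γ.lam n ^ m * ‖Γ.coeff ψ n‖ ^ 2)
      + 2 * (Γ.lam n ^ m * ‖Γ.coeff χ n‖ ^ 2) :=
    ((hψ.mul_left 2).add (hχ.mul_left 2))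
  refine Summable.of_nonneg_of_le (fun n =>
    mul_nonneg (Real.rpow_nonneg (Γ.lam_pos n).le m) (sq_nonneg _)) (fun n => ?_) h2
  have hl : (0:ℝ) ≤ Γ.lam n ^ m := Real.rpow_nonneg (Γ.lam_pos n).le m
  rw [Γ.coeff_sub]
  have hn : ‖Γ.coeff ψ n - Γ.coeff χ n‖ ≤ ‖Γ.coeff ψ n‖ + ‖Γ.coeff χ n‖ := norm_sub_le _ _
  have hsq : ‖Γ.coeff ψ n - Γ.coeff χ n‖ ^ 2
      ≤ 2 * ‖Γ.coeff ψ n‖ ^ 2 + 2 * ‖Γ.coeff χ n‖ ^ 2 := by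
    nlinarith [sq_nonneg (‖Γ.coeff ψ n‖ - ‖Γ.coeff χ n‖),
      norm_nonneg (Γ.coeff ψ n - Γ.coeff χ n), norm_nonneg (Γ.coeff ψ n),
      norm_nonneg (Γ.coeff χ n)]
  calc Γ.lam n ^ m * ‖Γ.coeff ψ n - Γ.coeff χ n‖ ^ 2
      ≤ Γ.lam n ^ m * (2 * ‖Γ.coeff ψ n‖ ^ 2 + 2 * ‖Γ.coeff χ n‖ ^ 2) :=
        mul_le_mul_of_nonneg_left hsq hl
    _ = 2 * (Γ.lam n ^ m * ‖Γ.coeff ψ n‖ ^ 2) + 2 * (Γ.lam n ^ m * ‖Γ.coeff χ n‖ ^ 2) := by ring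

lemma apply_summand_summable {χ : H} (h : Γ.MemHs 2 χ) :
    Summable fun n => ((Γ.lam n : ℂ) * Γ.coeff χ n) • (Γ.e n : H) := by
  have ho := Γ.e.orthonormal.orthogonalFamily
  rw [show (fun n => ((Γ.lam n : ℂ) * Γ.coeff χ n) • (Γ.e n : H))
      = fun n => LinearIsometry.toSpanSingleton ℂ H (Γ.e.orthonormal.1 n)
          ((Γ.lam n : ℂ) * Γ.coeff χ n) from funext fun n => rfl]
  rw [ho.summable_iff_norm_sq_summable]
  refine h.congr fun n => ?_
  have hpos := Γ.lam_pos n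
  rw [norm_mul, mul_pow, show (2:ℝ) = ((2:ℕ):ℝ) by norm_num, Real.rpow_natCast]
  norm_num [abs_of_pos hpos]

end DiscreteSpectralOp

end Auxiliary

namespace DiscreteSpectralOp

variable (Γ : DiscreteSpectralOp H)

lemma inner_apply_eq (ψ χ : H) (hχ : Γ.MemHs 2 χ) :
    ⟪ψ, Γ.apply χ⟫_ℂ
      = ∑' n, ((Γ.lam n : ℂ) * Γ.coeff χ n) * (starRingEnd ℂ) (Γ.coeff ψ n) := by
  have hmap := ContinuousLinearMap.map_tsum (innerSL ℂ ψ) (Γ.apply_summand_summable hχ)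
  simp only [innerSL_apply_apply] at hmap
  rw [DiscreteSpectralOp.apply, hmap]
  refine tsum_congr fun n => ?_
  have hconj : ⟪ψ, (Γ.e n : H)⟫_ℂ = (starRingEnd ℂ) (Γ.coeff ψ n) := by
    rw [coeff, Γ.e.repr_apply_apply, inner_conj_symm]
  rw [inner_smul_right, hconj, mul_comm]

lemma summable_inner_terms {ψ χ : H} (hψ : Γ.MemHs 1 ψ) (hχ : Γ.MemHs 1 χ) :
    Summable fun n => Γ.lam n * ((starRingEnd ℂ) (Γ.coeff ψ n) * Γ.coeff χ n).re := by
  refine Summable.of_norm_bounded (((Γ.summable_one hψ).mul_left (1/2)).add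
    ((Γ.summable_one hχ).mul_left (1/2))) fun n => ?_
  have hpos := Γ.lam_pos n
  have h1 : |((starRingEnd ℂ) (Γ.coeff ψ n) * Γ.coeff χ n).re|
      ≤ ‖Γ.coeff ψ n‖ * ‖Γ.coeff χ n‖ := by
    calc |((starRingEnd ℂ) (Γ.coeff ψ n) * Γ.coeff χ n).re|
        ≤ ‖(starRingEnd ℂ) (Γ.coeff ψ n) * Γ.coeff χ n‖ :=
          Complex.abs_re_le_norm _
      _ = ‖Γ.coeff ψ n‖ * ‖Γ.coeff χ n‖ := by
          rw [norm_mul, RCLike.norm_conj]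
  rw [Real.norm_eq_abs, abs_mul, abs_of_pos hpos]
  have h2 : Γ.lam n * |((starRingEnd ℂ) (Γ.coeff ψ n) * Γ.coeff χ n).re|
      ≤ Γ.lam n * (‖Γ.coeff ψ n‖ * ‖Γ.coeff χ n‖) :=
    mul_le_mul_of_nonneg_left h1 hpos.le
  have h3 : Γ.lam n * (‖Γ.coeff ψ n‖ * ‖Γ.coeff χ n‖)
      ≤ 1/2 * (Γ.lam n * ‖Γ.coeff ψ n‖ ^ 2) + 1/2 * (Γ.lam n * ‖Γ.coeff χ n‖ ^ 2) := by
    nlinarith [mul_nonneg hpos.le (sq_nonneg (‖Γ.coeff ψ n‖ - ‖Γ.coeff χ n‖))]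
  linarith

lemma re_inner_apply {ψ χ : H} (hψ : Γ.MemHs 1 ψ) (hχ : Γ.MemHs 2 χ) :
    (⟪ψ, Γ.apply χ⟫_ℂ).re
      = ∑' n, Γ.lam n * ((starRingEnd ℂ) (Γ.coeff ψ n) * Γ.coeff χ n).re := by
  rw [Γ.inner_apply_eq ψ χ hχ]
  have hχ1 := Γ.summable_one (hχ.one_of_two Γ)
  have hψ1 := Γ.summable_one hψ
  have hs : Summable fun n => ((Γ.lam n : ℂ) * Γ.coeff χ n) * (starRingEnd ℂ) (Γ.coeff ψ n) := by
    refine Summable.of_norm_bounded ((hχ1.mul_left (1/2)).add (hψ1.mul_left (1/2)))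
      fun n => ?_
    have hpos := Γ.lam_pos n
    rw [norm_mul, norm_mul, RCLike.norm_conj, Complex.norm_real, Real.norm_eq_abs,
      abs_of_pos hpos]
    nlinarith [mul_nonneg hpos.le (sq_nonneg (‖Γ.coeff χ n‖ - ‖Γ.coeff ψ n‖)),
      norm_nonneg (Γ.coeff χ n), norm_nonneg (Γ.coeff ψ n)]
  rw [Complex.re_tsum hs]
  refine tsum_congr fun n => ?_
  rw [mul_assoc, Complex.re_ofReal_mul, mul_comm (Γ.coeff χ n)]

end DiscreteSpectralOp

lemma hasDerivAt_norm_sq' {f : ℝ → H} {f' : H} {x : ℝ} (hf : HasDerivAt f f' x) :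
    HasDerivAt (fun s => ‖f s‖ ^ 2) (2 * (⟪f x, f'⟫_ℂ).re) x := by
  have h1 : HasDerivAt (fun t => ⟪f t, f t⟫_ℂ) (⟪f x, f'⟫_ℂ + ⟪f', f x⟫_ℂ) x :=
    hf.inner ℂ hf
  have h2 : HasDerivAt (fun s => Complex.reCLM ⟪f s, f s⟫_ℂ)
      (Complex.reCLM (⟪f x, f'⟫_ℂ + ⟪f', f x⟫_ℂ)) x :=
    Complex.reCLM.hasFDerivAt.comp_hasDerivAt x h1
  have h3 : (fun s => ‖f s‖ ^ 2) = fun s => Complex.reCLM ⟪f s, f s⟫_ℂ := by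
    funext s
    have := @inner_self_eq_norm_sq ℂ _ _ _ _ (f s)
    simp only [Complex.reCLM_apply, RCLike.re_to_complex] at *
    rw [← this]
  rw [h3]
  convert h2 using 1
  have hc : ⟪f', f x⟫_ℂ = (starRingEnd ℂ) ⟪f x, f'⟫_ℂ := (inner_conj_symm _ _).symm
  simp only [Function.comp, Complex.reCLM_apply, Complex.add_re, hc, Complex.conj_re]
  ring

open scoped Topology
lemma unitary_hasDerivAt (Γ : DiscreteSpectralOp H) (L : H →ₗ[ℂ] H) (G : UnitaryGroup H)
    (hgen : ∀ ψ : H, Γ.MemHs 1 ψ → HasDerivAt (fun t => G.U t ψ) (Complex.I • L ψ) 0)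
    (φ₀ : H) {s : ℝ} (hmem : Γ.MemHs 1 (G.U s φ₀)) :
    HasDerivAt (fun r => G.U r φ₀) (Complex.I • L (G.U s φ₀)) s := by
  have h1 : HasDerivAt (fun t => G.U t (G.U s φ₀)) (Complex.I • L (G.U s φ₀)) (s - s) := by
    rw [sub_self]; exact hgen _ hmem
  have h2 := HasDerivAt.comp_sub_const s s h1
  have h3 : (fun r : ℝ => G.U (r - s) (G.U s φ₀)) = fun r => G.U r φ₀ := by
    funext r
    rw [← G.map_add, sub_add_cancel]
  rw [h3] at h2
  exact h2

lemma free_solution_eq_group (Γ : DiscreteSpectralOp H) (L : H →ₗ[ℂ] H) (G : UnitaryGroup H)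
    (hsym : ∀ ψ χ : H, Γ.MemHs 1 ψ → Γ.MemHs 1 χ → ⟪L ψ, χ⟫_ℂ = ⟪ψ, L χ⟫_ℂ)
    (hgen : ∀ ψ : H, Γ.MemHs 1 ψ → HasDerivAt (fun t => G.U t ψ) (Complex.I • L ψ) 0)
    (φ₀ : H) (hφ₀ : Γ.MemHs 1 φ₀)
    (hU1 : ∀ t : ℝ, 0 < t → Γ.MemHs 1 (G.U t φ₀))
    (φ0 : ℝ → H) (hφ0 : IsFreeSolution Γ L φ₀ φ0)
    {t : ℝ} (ht : 0 < t) : φ0 t = G.U t φ₀ := by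
  set d : ℝ → H := fun s => φ0 s - G.U s φ₀ with hd
  have hdmem : ∀ s : ℝ, 0 < s → Γ.MemHs 1 (d s) := fun s hs =>
    DiscreteSpectralOp.MemHs.sub Γ (hφ0.2 s).1 (hU1 s hs)
  have hdd : ∀ s : ℝ, 0 < s → HasDerivAt d (Complex.I • L (d s)) s := by
    intro s hs
    have h1 := (hφ0.2 s).2
    have h2 := unitary_hasDerivAt Γ L G hgen φ₀ (hU1 s hs)
    have h3 := h1.sub h2
    convert h3 using 1
    rw [hd]
    · rfl
    simp only [hd, map_sub, smul_sub]
  have hg : ∀ s : ℝ, 0 < s → HasDerivAt (fun r => ‖d r‖ ^ 2) 0 s := by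
    intro s hs
    have h := hasDerivAt_norm_sq' (hdd s hs)
    convert h using 1
    have hmem := hdmem s hs
    have hsymm := hsym (d s) (d s) hmem hmem
    have hreal : (⟪d s, L (d s)⟫_ℂ).im = 0 := by
      refine Complex.conj_eq_iff_im.mp ?_
      rw [inner_conj_symm]
      exact hsymm
    rw [inner_smul_right]
    simp [Complex.mul_re, Complex.I_re, Complex.I_im, hreal]
  have hdiff : Differentiable ℝ φ0 := fun s => ((hφ0.2 s).2).differentiableAt
  have hcont0 : Continuous φ0 := hdiff.continuous
  have hcontU : Continuous fun s => (G.U s φ₀ : H) := G.strong_cont φ₀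
  have hgc : Continuous fun s => ‖d s‖ ^ 2 := (hcont0.sub hcontU).norm.pow 2
  have hconst : ∀ δ : ℝ, 0 < δ → δ ≤ t → ‖d t‖ ^ 2 = ‖d δ‖ ^ 2 := by
    intro δ h0 hδt
    have := constant_of_has_deriv_right_zero (f := fun r => ‖d r‖ ^ 2) (a := δ) (b := t)
      hgc.continuousOn
      (fun x hx => ((hg x (lt_of_lt_of_le h0 hx.1)).hasDerivWithinAt))
    exact this t (right_mem_Icc.mpr hδt)
  have hd0 : d 0 = 0 := by
    rw [hd]
    simp only [hφ0.1, G.map_zero, sub_self]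
  have hlim : Tendsto (fun δ => ‖d δ‖ ^ 2) (𝓝[>] (0:ℝ)) (𝓝 (‖d 0‖ ^ 2)) :=
    (hgc.tendsto 0).mono_left nhdsWithin_le_nhds
  have hev : (fun δ => ‖d δ‖ ^ 2) =ᶠ[𝓝[>] (0:ℝ)] fun _ => ‖d t‖ ^ 2 := by
    filter_upwards [Ioc_mem_nhdsGT_of_mem (Set.mem_Ico.mpr ⟨le_refl (0:ℝ), ht⟩)] with δ hδ
    exact (hconst δ hδ.1 hδ.2).symm
  have huniq : ‖d t‖ ^ 2 = ‖d 0‖ ^ 2 :=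
    tendsto_nhds_unique (tendsto_const_nhds.congr' hev.symm) hlim
  have : d t = 0 := by
    rw [hd0] at huniq
    simpa using huniq
  have := sub_eq_zero.mp this
  exact this

/-- **Lemma 2.5.**  Under conditions (2.1) and (2.2), if `φ⁰` and `φ^ε` solve
`(φ⁰)' = iLφ⁰` and `(φ^ε)' = (iL − εΓ)φ^ε` with the same initial datum
`φ₀ ∈ H¹(Γ)`, then for `t > 0`
`(d/dt)‖φ^ε(t) − φ⁰(t)‖² ≤ (ε/2)‖φ⁰(t)‖₁² ≤ (ε/2)B(t)²‖φ₀‖₁²`. -/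
theorem approximation_lemma
    (Γ : DiscreteSpectralOp H) (L : H →ₗ[ℂ] H) (G : UnitaryGroup H)
    (hsym : ∀ ψ χ : H, Γ.MemHs 1 ψ → Γ.MemHs 1 χ → ⟪L ψ, χ⟫_ℂ = ⟪ψ, L χ⟫_ℂ)
    (hgen : ∀ ψ : H, Γ.MemHs 1 ψ →
      HasDerivAt (fun t => G.U t ψ) (Complex.I • L ψ) 0)
    (C : ℝ) (hL : ∀ ψ : H, Γ.MemHs 1 ψ → ‖L ψ‖ ≤ C * Γ.snorm 1 ψ)
    (B : ℝ → ℝ) (hBloc : ∀ T : ℝ, 0 < T → IntegrableOn (fun t => (B t) ^ 2) (Ioc 0 T))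
    (hB : ∀ ψ : H, Γ.MemHs 1 ψ → ∀ t : ℝ, 0 < t →
      Γ.MemHs 1 (G.U t ψ) ∧ Γ.snorm 1 (G.U t ψ) ≤ B t * Γ.snorm 1 ψ)
    (ε : ℝ) (hε : 0 < ε) (φ₀ : H) (hφ₀ : Γ.MemHs 1 φ₀)
    (φe : ℝ → H) (hφe : IsDampedSolution Γ L ε φ₀ φe)
    (φ0 : ℝ → H) (hφ0 : IsFreeSolution Γ L φ₀ φ0) :
    ∀ t : ℝ, 0 < t → ∃ D : ℝ,
      HasDerivAt (fun s => ‖φe s - φ0 s‖ ^ 2) D t ∧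
      D ≤ ε / 2 * Γ.snorm 1 (φ0 t) ^ 2 ∧
      ε / 2 * Γ.snorm 1 (φ0 t) ^ 2 ≤ ε / 2 * (B t) ^ 2 * Γ.snorm 1 φ₀ ^ 2 := by
  intro t ht
  have hφe2 : Γ.MemHs 2 (φe t) := (hφe.2.2 t ht).1
  have hφe1 : Γ.MemHs 1 (φe t) := hφe2.one_of_two Γ
  have hφ01 : Γ.MemHs 1 (φ0 t) := (hφ0.2 t).1
  have hw1 : Γ.MemHs 1 (φe t - φ0 t) := DiscreteSpectralOp.MemHs.sub Γ hφe1 hφ01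
  have hw' : HasDerivAt (fun s => φe s - φ0 s)
      (Complex.I • L (φe t - φ0 t) - (ε:ℂ) • Γ.apply (φe t)) t := by
    have h := ((hφe.2.2 t ht).2).sub (hφ0.2 t).2
    convert h using 1
    · rfl
    simp only [map_sub, smul_sub]
    abel
  refine ⟨2 * (⟪φe t - φ0 t,
      Complex.I • L (φe t - φ0 t) - (ε:ℂ) • Γ.apply (φe t)⟫_ℂ).re,
    hasDerivAt_norm_sq' hw', ?_, ?_⟩
  · -- first inequality
    have hzero : (⟪φe t - φ0 t, Complex.I • L (φe t - φ0 t)⟫_ℂ).re = 0 := by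
      have hsymm := hsym _ _ hw1 hw1
      have him : (⟪φe t - φ0 t, L (φe t - φ0 t)⟫_ℂ).im = 0 :=
        Complex.conj_eq_iff_im.mp (by rw [inner_conj_symm]; exact hsymm)
      rw [inner_smul_right]
      simp only [Complex.mul_re, Complex.I_re, Complex.I_im, him]
      ring
    have hre : (⟪φe t - φ0 t, (ε:ℂ) • Γ.apply (φe t)⟫_ℂ).re
        = ε * ∑' n, Γ.lam n
            * ((starRingEnd ℂ) (Γ.coeff (φe t - φ0 t) n) * Γ.coeff (φe t) n).re := by
      rw [inner_smul_right, Complex.re_ofReal_mul, Γ.re_inner_apply hw1 hφe2]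
    have hD : 2 * (⟪φe t - φ0 t,
        Complex.I • L (φe t - φ0 t) - (ε:ℂ) • Γ.apply (φe t)⟫_ℂ).re
        = ∑' n, -(2*ε) * (Γ.lam n
            * ((starRingEnd ℂ) (Γ.coeff (φe t - φ0 t) n) * Γ.coeff (φe t) n).re) := by
      rw [inner_sub_right, Complex.sub_re, hzero, hre, tsum_mul_left]
      ring
    rw [hD, Γ.sq_snorm_one, ← tsum_mul_left]
    refine Summable.tsum_le_tsum (fun n => ?_)
      ((Γ.summable_inner_terms hw1 hφe1).mul_left (-(2*ε)))
      ((Γ.summable_one hφ01).mul_left (ε/2))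
    have hpos := Γ.lam_pos n
    have key : -(2:ℝ) * ((starRingEnd ℂ)
          (Γ.coeff (φe t) n - Γ.coeff (φ0 t) n) * Γ.coeff (φe t) n).re
        ≤ 1/2 * ‖Γ.coeff (φ0 t) n‖ ^ 2 := by
      set x := Γ.coeff (φ0 t) n
      set y := Γ.coeff (φe t) n
      have hn : ‖x‖ ^ 2 = x.re ^ 2 + x.im ^ 2 := by
        rw [Complex.sq_norm, Complex.normSq_apply]; ring
      simp only [map_sub, sub_mul, Complex.sub_re, Complex.mul_re,
        Complex.conj_re, Complex.conj_im]
      rw [hn]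
      nlinarith [sq_nonneg (x.re - 2 * y.re), sq_nonneg (x.im - 2 * y.im)]
    calc -(2*ε) * (Γ.lam n
          * ((starRingEnd ℂ) (Γ.coeff (φe t - φ0 t) n) * Γ.coeff (φe t) n).re)
        = (ε * Γ.lam n) * (-(2:ℝ) * ((starRingEnd ℂ)
            (Γ.coeff (φe t) n - Γ.coeff (φ0 t) n) * Γ.coeff (φe t) n).re) := by
          rw [Γ.coeff_sub]; ring
      _ ≤ (ε * Γ.lam n) * (1/2 * ‖Γ.coeff (φ0 t) n‖ ^ 2) :=
          mul_le_mul_of_nonneg_left key (by positivity)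
      _ = ε/2 * (Γ.lam n * ‖Γ.coeff (φ0 t) n‖ ^ 2) := by ring
  · -- second inequality
    have heq : φ0 t = G.U t φ₀ := free_solution_eq_group Γ L G hsym hgen φ₀ hφ₀
      (fun s hs => (hB φ₀ hφ₀ s hs).1) φ0 hφ0 ht
    have hble : Γ.snorm 1 (φ0 t) ≤ B t * Γ.snorm 1 φ₀ := by
      rw [heq]; exact (hB φ₀ hφ₀ t ht).2
    have h0 : 0 ≤ Γ.snorm 1 (φ0 t) := Γ.my_snorm_nonneg 1 _
    have hsq : Γ.snorm 1 (φ0 t) ^ 2 ≤ (B t) ^ 2 * Γ.snorm 1 φ₀ ^ 2 := by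
      have := pow_le_pow_left₀ h0 hble 2
      rwa [mul_pow] at this
    calc ε/2 * Γ.snorm 1 (φ0 t) ^ 2
        ≤ ε/2 * ((B t) ^ 2 * Γ.snorm 1 φ₀ ^ 2) :=
          mul_le_mul_of_nonneg_left hsq (by positivity)
      _ = ε/2 * (B t) ^ 2 * Γ.snorm 1 φ₀ ^ 2 := by ring
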